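/- Let m ≥ 2 be an integer and c_m ≠ 0 a real number. Suppose w : (−∞, τ₀] → ℝ is a differentiable solution of w′ = c_m w^m + g(w) where |g(w)| ≤ C|w|^{m+1} for small |w|, with w(τ) > 0 for all τ and w(τ) → 0+ as τ → −∞. Then lim_{τ→−∞} τ·w(τ)^{m−1} = 1/((1−m)c_m); in particular c_m > 0 when m is even and w(τ) = ((1/((1−m)c_m τ))^{1/(m−1)})·(1 + o(1)) as τ → −∞. -/

import Mathlib

open Filter

/-- Decay rate of a positive solution of w′ = c_m w^m + O(w^{m+1}) tending to
0 as τ → −∞: τ·w^{m−1} → 1/((1−m)c_m); in particular c_m > 0 if m is even. -/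
theorem decay_rate_one_dim_center (m : ℕ) (hm : 2 ≤ m) (c : ℝ) (hc : c ≠ 0)
    (C δ τ₀ : ℝ) (hC : 0 < C) (hδ : 0 < δ) (w g : ℝ → ℝ)
    (hw : ∀ τ ≤ τ₀, HasDerivAt w (c * w τ ^ m + g (w τ)) τ)
    (hg : ∀ x : ℝ, |x| ≤ δ → |g x| ≤ C * |x| ^ (m + 1))
    (hpos : ∀ τ ≤ τ₀, 0 < w τ)
    (hlim : Tendsto w atBot (nhds 0)) :
    Tendsto (fun τ => τ * w τ ^ (m - 1)) atBot (nhds (1 / ((1 - (m : ℝ)) * c)))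
    ∧ (Even m → 0 < c) := by
  obtain ⟨k, rfl⟩ : ∃ k, m = k + 2 := ⟨m - 2, by omega⟩
  clear hm
  simp only [show k + 2 - 1 = k + 1 from rfl] at *
  set L : ℝ := (1 - ((k : ℝ) + 2)) * c with hL
  have hcast : ((k + 2 : ℕ) : ℝ) = (k : ℝ) + 2 := by push_cast; ring
  rw [hcast]
  have hm1 : (1 : ℝ) - ((k : ℝ) + 2) ≠ 0 := by
    have : (0:ℝ) ≤ (k:ℝ) := Nat.cast_nonneg k
    intro h; linarith
  have hLne : L ≠ 0 := mul_ne_zero hm1 hc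
  set u : ℝ → ℝ := fun τ => (w τ ^ (k + 1))⁻¹ with hu
  set D : ℝ → ℝ := fun τ => L - ((k : ℝ) + 1) * (g (w τ) / w τ ^ (k + 2)) with hD
  -- derivative of u
  have hderiv : ∀ τ ≤ τ₀, HasDerivAt u (D τ) τ := by
    intro τ hτ
    have hwτ : w τ ≠ 0 := (hpos τ hτ).ne'
    have h1 : HasDerivAt (fun s => w s ^ (k + 1))
        (((k + 1 : ℕ) : ℝ) * w τ ^ (k + 1 - 1) * (c * w τ ^ (k + 2) + g (w τ))) τ :=
      (hw τ hτ).pow (k + 1)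
    have h2 := (h1.inv (pow_ne_zero _ hwτ) : HasDerivAt (fun s => (w s ^ (k + 1))⁻¹) _ τ)
    refine h2.congr_deriv ?_
    simp only [show k + 1 - 1 = k from rfl, hD, hL]
    push_cast
    field_simp
    ring
  -- the derivative tends to L at -infty
  have hgw : Tendsto (fun τ => g (w τ) / w τ ^ (k + 2)) atBot (nhds 0) := by
    have hCw : Tendsto (fun τ => C * w τ) atBot (nhds 0) := by
      simpa using hlim.const_mul C
    apply squeeze_zero_norm' _ hCw
    have h1 : ∀ᶠ τ in atBot, τ ≤ τ₀ := eventually_le_atBot τ₀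
    have h2 : ∀ᶠ τ in atBot, |w τ| < δ := by
      have := hlim.eventually (eventually_abs_sub_lt 0 hδ)
      simpa using this
    filter_upwards [h1, h2] with τ hτ hwδ
    have hwpos := hpos τ hτ
    have habs : |w τ| = w τ := abs_of_pos hwpos
    have hb := hg (w τ) (le_of_lt hwδ)
    rw [habs] at hb
    have hpm : (0:ℝ) < w τ ^ (k + 2) := pow_pos hwpos _
    rw [Real.norm_eq_abs, abs_div, abs_of_pos hpm, div_le_iff₀ hpm]
    calc |g (w τ)| ≤ C * w τ ^ (k + 2 + 1) := hb
      _ = C * w τ * w τ ^ (k + 2) := by ring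
  have hDlim : Tendsto D atBot (nhds L) := by
    have : Tendsto (fun τ => L - ((k:ℝ) + 1) * (g (w τ) / w τ ^ (k + 2))) atBot
        (nhds (L - ((k:ℝ) + 1) * 0)) :=
      tendsto_const_nhds.sub ((hgw.const_mul _))
    simpa using this
  -- u τ / τ → L
  have huτ : Tendsto (fun τ => u τ / τ) atBot (nhds L) := by
    rw [Metric.tendsto_nhds]
    intro ε hε
    rw [eventually_atBot]
    obtain ⟨τ₁', hτ₁'⟩ := eventually_atBot.mp (hDlim.eventually
      (eventually_abs_sub_lt L (half_pos hε)))
    set τ₁ : ℝ := min τ₁' (min τ₀ (-1)) with hτ₁def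
    have hτ₁0 : τ₁ ≤ τ₀ := le_trans (min_le_right _ _) (min_le_left _ _)
    have hτ₁neg : τ₁ ≤ -1 := le_trans (min_le_right _ _) (min_le_right _ _)
    have hDτ : ∀ s ≤ τ₁, |D s - L| < ε / 2 := fun s hs =>
      hτ₁' s (le_trans hs (min_le_left _ _))
    set A : ℝ := |u τ₁| + |L| * |τ₁| with hA
    have hA0 : 0 ≤ A := by positivity
    refine ⟨min (τ₁ - 1) (-(2 * A / ε + 1)), fun τ hτ => ?_⟩
    have hττ₁ : τ < τ₁ := lt_of_le_of_lt (le_trans hτ (min_le_left _ _)) (by linarith)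
    have hτbig : τ ≤ -(2 * A / ε + 1) := le_trans hτ (min_le_right _ _)
    have hτneg : τ < 0 := by
      have : 0 ≤ 2 * A / ε := by positivity
      linarith
    obtain ⟨ξ, hξmem, hξ⟩ := exists_hasDerivAt_eq_slope u D hττ₁
      (fun s hs => (hderiv s (le_trans hs.2 hτ₁0)).continuousAt.continuousWithinAt)
      (fun s hs => hderiv s (le_trans (le_of_lt hs.2) hτ₁0))
    have hξle : ξ ≤ τ₁ := le_of_lt hξmem.2
    have hDξ : |D ξ - L| < ε / 2 := hDτ ξ hξle
    have hne : τ₁ - τ ≠ 0 := ne_of_gt (by linarith)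
    have hslope : u τ₁ - u τ = D ξ * (τ₁ - τ) := by
      rw [hξ, div_mul_cancel₀ _ hne]
    have hkey : u τ - L * τ = u τ₁ - (D ξ - L) * (τ₁ - τ) - L * τ₁ := by
      have h3 : u τ = u τ₁ - D ξ * (τ₁ - τ) := by linarith
      rw [h3]; ring
    have hbound : |u τ - L * τ| ≤ A + ε / 2 * (τ₁ - τ) := by
      rw [hkey]
      calc |u τ₁ - (D ξ - L) * (τ₁ - τ) - L * τ₁|
          ≤ |u τ₁ - (D ξ - L) * (τ₁ - τ)| + |L * τ₁| := abs_sub _ _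
        _ ≤ |u τ₁| + |(D ξ - L) * (τ₁ - τ)| + |L * τ₁| := by
            have := abs_sub (u τ₁) ((D ξ - L) * (τ₁ - τ)); linarith
        _ ≤ A + ε / 2 * (τ₁ - τ) := by
            rw [abs_mul, abs_mul, abs_of_pos (by linarith : (0:ℝ) < τ₁ - τ)]
            have h1 : |D ξ - L| * (τ₁ - τ) ≤ ε / 2 * (τ₁ - τ) :=
              mul_le_mul_of_nonneg_right (le_of_lt hDξ) (by linarith)
            rw [hA]
            linarith
    rw [Real.dist_eq]
    have habsτ : |τ| = -τ := abs_of_neg hτneg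
    have hdiv : u τ / τ - L = (u τ - L * τ) / τ := by
      rw [sub_div, mul_div_assoc, div_self (ne_of_lt hτneg), mul_one]
    rw [hdiv, abs_div, habsτ]
    rw [div_lt_iff₀ (by linarith : (0:ℝ) < -τ)]
    have h1 : τ₁ - τ ≤ -τ := by linarith
    have h2 : A < ε / 2 * (-τ) := by
      have hτabs : 2 * A / ε + 1 ≤ -τ := by linarith
      have h4 : ε / 2 * (2 * A / ε + 1) ≤ ε / 2 * (-τ) :=
        mul_le_mul_of_nonneg_left hτabs (by linarith)
      have heq : ε / 2 * (2 * A / ε + 1) = A + ε / 2 := by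
        field_simp
      linarith
    calc |u τ - L * τ| ≤ A + ε / 2 * (τ₁ - τ) := hbound
      _ ≤ A + ε / 2 * (-τ) := by nlinarith
      _ < ε / 2 * (-τ) + ε / 2 * (-τ) := by linarith
      _ = ε * (-τ) := by ring
  -- conclude the limit
  have hmain : Tendsto (fun τ => τ * w τ ^ (k + 1)) atBot (nhds (1 / L)) := by
    have hinv : Tendsto (fun τ => (u τ / τ)⁻¹) atBot (nhds L⁻¹) := huτ.inv₀ hLne
    rw [one_div]
    apply hinv.congr'
    filter_upwards [eventually_le_atBot (min τ₀ (-1))] with τ hτ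
    have hτ0 : τ ≤ τ₀ := le_trans hτ (min_le_left _ _)
    have hτneg : τ < 0 := lt_of_le_of_lt (le_trans hτ (min_le_right _ _)) (by norm_num)
    rw [hu, inv_div]
    show τ / (w τ ^ (k + 1))⁻¹ = _
    rw [div_eq_mul_inv, inv_inv]
  refine ⟨hmain, fun _ => ?_⟩
  -- c > 0
  have hle : 1 / L ≤ 0 := by
    apply le_of_tendsto hmain
    filter_upwards [eventually_le_atBot (min τ₀ (-1))] with τ hτ
    have hτ0 : τ ≤ τ₀ := le_trans hτ (min_le_left _ _)
    have hτneg : τ < 0 := lt_of_le_of_lt (le_trans hτ (min_le_right _ _)) (by norm_num)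
    have hwpos : 0 < w τ ^ (k + 1) := pow_pos (hpos τ hτ0) _
    nlinarith
  have hLneg : L < 0 := by
    rcases lt_or_gt_of_ne hLne with h | h
    · exact h
    · exfalso
      have : 0 < 1 / L := by positivity
      linarith
  have hm2 : (1:ℝ) - ((k:ℝ) + 2) < 0 := by
    have : (0:ℝ) ≤ (k:ℝ) := Nat.cast_nonneg k
    linarith
  nlinarith [hLneg]
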